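/- Let Q ∈ K^{s×n} satisfy Q^H Q = R_U and let B_r* be a best rank-r approximation (in Frobenius norm) of Q U_m, where U_m is the snapshot matrix. Then the POD space POD_r(U_m, ‖·‖_U) := argmin over r-dimensional subspaces W_r of range(U_m) of Σ_{i=1}^m ‖u(μ^i) − P_{W_r} u(μ^i)‖_U^2 equals {R_U^{-1} Q^H b : b ∈ range(B_r*)}. -/

import Mathlib

open Matrix BigOperators

noncomputable section

/-- Inner product induced by `R`: `⟨x,y⟩_U = ⟨R x, y⟩`. -/
def ipR {n : ℕ} (R : Matrix (Fin n) (Fin n) ℝ) (x y : Fin n → ℝ) : ℝ :=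
  R.mulVec x ⬝ᵥ y

/-- Norm induced by `R`. -/
def normR {n : ℕ} (R : Matrix (Fin n) (Fin n) ℝ) (x : Fin n → ℝ) : ℝ :=
  Real.sqrt (ipR R x x)

/-- Euclidean norm. -/
def norm2 {m : ℕ} (v : Fin m → ℝ) : ℝ :=
  Real.sqrt (v ⬝ᵥ v)

/-- Dual norm `‖y‖_{U'}` induced by `⟨·, R⁻¹ ·⟩`. -/
def normDual {n : ℕ} (R : Matrix (Fin n) (Fin n) ℝ) (y : Fin n → ℝ) : ℝ :=
  Real.sqrt (y ⬝ᵥ R⁻¹.mulVec y)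

/-- Dual seminorm `‖y‖_{Z'} = sup_{w ∈ Z, w ≠ 0} |⟨y,w⟩|/‖w‖_U`. -/
def dualSemi {n : ℕ} (R : Matrix (Fin n) (Fin n) ℝ) (Z : Submodule ℝ (Fin n → ℝ))
    (y : Fin n → ℝ) : ℝ :=
  ⨆ w : Z, |y ⬝ᵥ (w : Fin n → ℝ)| / normR R (w : Fin n → ℝ)

/-- Sketched dual seminorm `‖y‖_{Z'}^Θ = sup_{w ∈ Z, w ≠ 0} |⟨Θ R⁻¹ y, Θ w⟩|/‖Θ w‖`. -/
def skDualSemi {n k : ℕ} (R : Matrix (Fin n) (Fin n) ℝ) (Θ : Matrix (Fin k) (Fin n) ℝ)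
    (Z : Submodule ℝ (Fin n → ℝ)) (y : Fin n → ℝ) : ℝ :=
  ⨆ w : Z, |(Θ.mulVec (R⁻¹.mulVec y)) ⬝ᵥ (Θ.mulVec (w : Fin n → ℝ))| /
      norm2 (Θ.mulVec (w : Fin n → ℝ))

/-- `i`-th column of a matrix as a vector. -/
def colV {n m : ℕ} (M : Matrix (Fin n) (Fin m) ℝ) (i : Fin m) : Fin n → ℝ :=
  fun j => M j i

/-- Squared Frobenius norm. -/
def frob2 {a b : ℕ} (M : Matrix (Fin a) (Fin b) ℝ) : ℝ :=
  ∑ i, ∑ j, (M i j) ^ 2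

/-! ### Auxiliary lemmas -/

lemma frob2_eq_sum_cols {a b : ℕ} (M : Matrix (Fin a) (Fin b) ℝ) :
    frob2 M = ∑ j, colV M j ⬝ᵥ colV M j := by
  rw [frob2, Finset.sum_comm]
  simp [colV, dotProduct, sq]

lemma col_mem_range {a b : ℕ} (M : Matrix (Fin a) (Fin b) ℝ) (j : Fin b) :
    colV M j ∈ LinearMap.range M.mulVecLin :=
  ⟨Pi.single j 1, by funext i; simp [Matrix.mulVecLin_apply, colV]⟩

lemma range_le_of_cols {a b : ℕ} (M : Matrix (Fin a) (Fin b) ℝ)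
    (S : Submodule ℝ (Fin a → ℝ)) (h : ∀ j, colV M j ∈ S) :
    LinearMap.range M.mulVecLin ≤ S := by
  rw [Matrix.range_mulVecLin, Submodule.span_le]
  rintro - ⟨j, rfl⟩
  exact h j

/-- Orthogonal projection onto a subspace of `Fin a → ℝ` (w.r.t. the dot product),
as a linear map. -/
lemma exists_proj {a : ℕ} (S : Submodule ℝ (Fin a → ℝ)) :
    ∃ L : (Fin a → ℝ) →ₗ[ℝ] (Fin a → ℝ),
      (∀ v, L v ∈ S) ∧ (∀ v ∈ S, L v = v) ∧
      (∀ v, ∀ w ∈ S, (v - L v) ⬝ᵥ w = 0) := by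
  classical
  set e : (Fin a → ℝ) ≃ₗ[ℝ] EuclideanSpace ℝ (Fin a) :=
    (WithLp.linearEquiv 2 ℝ (Fin a → ℝ)).symm with he
  set K : Submodule ℝ (EuclideanSpace ℝ (Fin a)) := S.map e.toLinearMap with hK
  have hdot : ∀ x y : Fin a → ℝ, (inner ℝ (e x) (e y) : ℝ) = x ⬝ᵥ y := by
    intro x y
    simp [PiLp.inner_apply, RCLike.inner_apply, dotProduct, he, WithLp.linearEquiv,
      WithLp.equiv, Equiv.refl, mul_comm]
  refine ⟨e.symm.toLinearMap ∘ₗ (K.subtype ∘ₗ K.orthogonalProjectionOnto.toLinearMap) ∘ₗ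
      e.toLinearMap, ?_, ?_, ?_⟩
  · intro v
    have h : (K.orthogonalProjectionOnto (e v) : EuclideanSpace ℝ (Fin a)) ∈ K :=
      (K.orthogonalProjectionOnto (e v)).2
    obtain ⟨w, hw, hwe⟩ := h
    simpa [← hwe] using hw
  · intro v hv
    have hKe : e v ∈ K := Submodule.mem_map_of_mem hv
    have h := Submodule.orthogonalProjectionOnto_mem_subspace_eq_self (K := K) ⟨e v, hKe⟩
    simp only [LinearMap.coe_comp, Function.comp_apply, LinearEquiv.coe_coe,
      ContinuousLinearMap.coe_coe, Submodule.coe_subtype]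
    rw [show (K.orthogonalProjectionOnto (e v) : EuclideanSpace ℝ (Fin a)) = e v from
      congrArg Subtype.val h]
    exact e.symm_apply_apply v
  · intro v w hw
    have h1 : e v - (K.orthogonalProjectionOnto (e v) : EuclideanSpace ℝ (Fin a)) ∈ Kᗮ :=
      Submodule.sub_starProjection_mem_orthogonal (K := K) _
    have h2 : e w ∈ K := Submodule.mem_map_of_mem hw
    have h3 : (inner ℝ (e v - (K.orthogonalProjectionOnto (e v) : EuclideanSpace ℝ (Fin a)))
        (e w) : ℝ) = 0 := Submodule.inner_left_of_mem_orthogonal h2 h1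
    have h4 : e v - (K.orthogonalProjectionOnto (e v) : EuclideanSpace ℝ (Fin a)) =
        e (v - e.symm (K.orthogonalProjectionOnto (e v) : EuclideanSpace ℝ (Fin a))) := by
      rw [map_sub, e.apply_symm_apply]
    rw [h4, hdot] at h3
    simpa using h3

/-- Columns of a best rank-`r` approximation lie in the column space of `A`. -/
lemma best_cols_mem {s m r : ℕ} (A B : Matrix (Fin s) (Fin m) ℝ)
    (hrank : B.rank ≤ r)
    (hbest : ∀ C : Matrix (Fin s) (Fin m) ℝ, C.rank ≤ r →
      frob2 (A - B) ≤ frob2 (A - C)) :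
    ∀ j, colV B j ∈ LinearMap.range A.mulVecLin := by
  classical
  set S : Submodule ℝ (Fin s → ℝ) := LinearMap.range A.mulVecLin with hS
  obtain ⟨L, hLmem, hLid, hLorth⟩ := exists_proj S
  set C : Matrix (Fin s) (Fin m) ℝ := Matrix.of fun i j => L (colV B j) i with hC
  have hcolC : ∀ j, colV C j = L (colV B j) := fun j => rfl
  have hrankC : C.rank ≤ r := by
    refine le_trans ?_ hrank
    have h1 : LinearMap.range C.mulVecLin ≤
        (LinearMap.range B.mulVecLin).map L := by
      refine range_le_of_cols _ _ fun j => ?_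
      rw [hcolC]
      exact Submodule.mem_map_of_mem (col_mem_range B j)
    calc C.rank ≤ Module.finrank ℝ ((LinearMap.range B.mulVecLin).map L) :=
          Submodule.finrank_mono h1
      _ ≤ B.rank := Submodule.finrank_map_le _ _
  have key : ∀ j, colV (A - B) j ⬝ᵥ colV (A - B) j =
      colV (A - C) j ⬝ᵥ colV (A - C) j +
      (colV B j - L (colV B j)) ⬝ᵥ (colV B j - L (colV B j)) := by
    intro j
    have hLa : L (colV A j) = colV A j := hLid _ (col_mem_range A j)
    have hcAB : colV (A - B) j =
        (colV A j - L (colV B j)) - (colV B j - L (colV B j)) := by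
      funext i; simp [colV, Matrix.sub_apply, Pi.sub_apply]
    have hcAC : colV (A - C) j = colV A j - L (colV B j) := by
      funext i; simp [colV, hC, Matrix.sub_apply, Pi.sub_apply]
    have hxS : colV A j - L (colV B j) ∈ S := by
      have h : colV A j - L (colV B j) = L (colV A j - colV B j) := by
        rw [map_sub, hLa]
      rw [h]; exact hLmem _
    have hxy : (colV B j - L (colV B j)) ⬝ᵥ (colV A j - L (colV B j)) = 0 :=
      hLorth (colV B j) _ hxS
    have hyx : (colV A j - L (colV B j)) ⬝ᵥ (colV B j - L (colV B j)) = 0 := by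
      rw [dotProduct_comm]; exact hxy
    rw [hcAB, hcAC]
    simp only [dotProduct_sub, sub_dotProduct] at hxy hyx ⊢
    linarith [dotProduct_comm (colV A j) (colV B j),
      dotProduct_comm (colV A j) (L (colV B j)),
      dotProduct_comm (colV B j) (L (colV B j))]
  have hsum : frob2 (A - B) = frob2 (A - C) +
      ∑ j, (colV B j - L (colV B j)) ⬝ᵥ (colV B j - L (colV B j)) := by
    rw [frob2_eq_sum_cols, frob2_eq_sum_cols, ← Finset.sum_add_distrib]
    exact Finset.sum_congr rfl fun j _ => key j
  have hle := hbest C hrankC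
  have hzero : ∀ j ∈ Finset.univ,
      (colV B j - L (colV B j)) ⬝ᵥ (colV B j - L (colV B j)) = 0 := by
    have h0 : ∑ j, (colV B j - L (colV B j)) ⬝ᵥ (colV B j - L (colV B j)) = 0 := by
      have hnn : 0 ≤ ∑ j, (colV B j - L (colV B j)) ⬝ᵥ (colV B j - L (colV B j)) :=
        Finset.sum_nonneg fun j _ => Finset.sum_nonneg fun i _ => mul_self_nonneg _
      linarith
    exact (Finset.sum_eq_zero_iff_of_nonneg fun j _ =>
      Finset.sum_nonneg fun i _ => mul_self_nonneg _).1 h0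
  intro j
  have h1 : colV B j - L (colV B j) = 0 :=
    dotProduct_self_eq_zero.mp (hzero j (Finset.mem_univ j))
  have hb : colV B j = L (colV B j) := sub_eq_zero.mp h1
  rw [hb]; exact hLmem _

/-- A best rank-`r` approximation has rank exactly `r` (when `r ≤ rank A`). -/
lemma best_rank_eq {s m r : ℕ} (A B : Matrix (Fin s) (Fin m) ℝ)
    (hr : r ≤ A.rank) (hrank : B.rank ≤ r)
    (hbest : ∀ C : Matrix (Fin s) (Fin m) ℝ, C.rank ≤ r →
      frob2 (A - B) ≤ frob2 (A - C)) :
    B.rank = r := by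
  classical
  refine le_antisymm hrank ?_
  by_contra h
  push_neg at h
  have hAB : A ≠ B := by
    rintro rfl; omega
  have hcol : ∃ j, colV A j ≠ colV B j := by
    by_contra hc
    push_neg at hc
    exact hAB (Matrix.ext fun i j => congrFun (hc j) i)
  obtain ⟨j, hj⟩ := hcol
  set C : Matrix (Fin s) (Fin m) ℝ := B.updateCol j (colV A j) with hC
  have hcolCj : colV C j = colV A j := by
    funext i; simp [colV, hC, Matrix.updateCol_self]
  have hcolCne : ∀ j', j' ≠ j → colV C j' = colV B j' := by
    intro j' hj'; funext i; simp [colV, hC, Matrix.updateCol_ne hj']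
  have hrankC : C.rank ≤ r := by
    have h1 : LinearMap.range C.mulVecLin ≤
        LinearMap.range B.mulVecLin ⊔ (Submodule.span ℝ {colV A j}) := by
      refine range_le_of_cols _ _ fun j' => ?_
      by_cases hjj : j' = j
      · subst hjj; rw [hcolCj]
        exact Submodule.mem_sup_right (Submodule.mem_span_singleton_self _)
      · rw [hcolCne j' hjj]
        exact Submodule.mem_sup_left (col_mem_range B j')
    have h2 : Module.finrank ℝ
        (Submodule.span ℝ {colV A j} : Submodule ℝ (Fin s → ℝ)) ≤ 1 := by
      by_cases hv : colV A j = 0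
      · rw [hv, Submodule.span_zero_singleton]; simp
      · rw [finrank_span_singleton hv]
    calc C.rank ≤ Module.finrank ℝ
          (LinearMap.range B.mulVecLin ⊔ Submodule.span ℝ {colV A j} :
            Submodule ℝ (Fin s → ℝ)) := Submodule.finrank_mono h1
      _ ≤ B.rank + Module.finrank ℝ
          (Submodule.span ℝ {colV A j} : Submodule ℝ (Fin s → ℝ)) :=
          Submodule.finrank_add_le_finrank_add_finrank _ _
      _ ≤ B.rank + 1 := by omega
      _ ≤ r := by omega
  have hle := hbest C hrankC
  have hCj0 : colV (A - C) j = 0 := by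
    funext i; simp [colV, Matrix.sub_apply, hC, Matrix.updateCol_self]
  have hpos : 0 < colV (A - B) j ⬝ᵥ colV (A - B) j := by
    have hne : colV (A - B) j ≠ 0 := by
      intro h0
      apply hj
      funext i
      have h1 := congrFun h0 i
      simp only [colV, Matrix.sub_apply, Pi.zero_apply, sub_eq_zero] at h1
      exact h1
    have hnn : 0 ≤ colV (A - B) j ⬝ᵥ colV (A - B) j :=
      Finset.sum_nonneg fun i _ => mul_self_nonneg _
    rcases hnn.lt_or_eq with h' | h'
    · exact h'
    · exact absurd (dotProduct_self_eq_zero.mp h'.symm) hne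
  have hsplit : frob2 (A - B) = colV (A - B) j ⬝ᵥ colV (A - B) j +
      ∑ j' ∈ Finset.univ.erase j, colV (A - B) j' ⬝ᵥ colV (A - B) j' := by
    rw [frob2_eq_sum_cols]
    exact (Finset.add_sum_erase _ (fun j' => colV (A - B) j' ⬝ᵥ colV (A - B) j')
      (Finset.mem_univ j)).symm
  have hsplitC : frob2 (A - C) =
      ∑ j' ∈ Finset.univ.erase j, colV (A - B) j' ⬝ᵥ colV (A - B) j' := by
    rw [frob2_eq_sum_cols,
      ← Finset.add_sum_erase _ (fun j' => colV (A - C) j' ⬝ᵥ colV (A - C) j')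
        (Finset.mem_univ j), hCj0]
    simp only [zero_dotProduct, zero_add]
    refine Finset.sum_congr rfl fun j' hj' => ?_
    have hne : j' ≠ j := (Finset.mem_erase.mp hj').1
    have hc : colV (A - C) j' = colV (A - B) j' := by
      funext i; simp [colV, Matrix.sub_apply, hC, Matrix.updateCol_ne hne]
    rw [hc]
  rw [hsplit, hsplitC] at hle
  linarith

/-- The exact POD subspace equals `{R⁻¹ Qᴴ b : b ∈ range B_r*}`. -/
theorem exact_pod_characterization {n m s r : ℕ} (R : Matrix (Fin n) (Fin n) ℝ)
    (hR : R.PosDef) (Q : Matrix (Fin s) (Fin n) ℝ) (hQ : Qᵀ * Q = R)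
    (Um : Matrix (Fin n) (Fin m) ℝ) (hr : r ≤ (Q * Um).rank)
    (Bstar : Matrix (Fin s) (Fin m) ℝ)
    (hBstarRank : Bstar.rank ≤ r)
    (hBstarBest : ∀ C : Matrix (Fin s) (Fin m) ℝ, C.rank ≤ r →
      frob2 (Q * Um - Bstar) ≤ frob2 (Q * Um - C))
    (p : Fin m → (Fin n → ℝ))
    (hpmem : ∀ i, p i ∈ LinearMap.range (R⁻¹ * Qᵀ * Bstar).mulVecLin)
    (hporth : ∀ i, ∀ w ∈ LinearMap.range (R⁻¹ * Qᵀ * Bstar).mulVecLin,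
      ipR R (colV Um i - p i) w = 0) :
    LinearMap.range (R⁻¹ * Qᵀ * Bstar).mulVecLin ≤ LinearMap.range Um.mulVecLin ∧
    Module.finrank ℝ (LinearMap.range (R⁻¹ * Qᵀ * Bstar).mulVecLin) = r ∧
    ∀ W : Submodule ℝ (Fin n → ℝ), W ≤ LinearMap.range Um.mulVecLin →
      Module.finrank ℝ W = r →
      ∀ q : Fin m → (Fin n → ℝ),
        (∀ i, q i ∈ W ∧ ∀ w ∈ W, ipR R (colV Um i - q i) w = 0) →
        ∑ i, (normR R (colV Um i - p i)) ^ 2 ≤ ∑ i, (normR R (colV Um i - q i)) ^ 2 := by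
  classical
  have hRinvR : R⁻¹ * R = 1 :=
    Matrix.nonsing_inv_mul R ((Matrix.isUnit_iff_isUnit_det R).mp hR.isUnit)
  set A : Matrix (Fin s) (Fin m) ℝ := Q * Um with hA
  have hM1 : (R⁻¹ * Qᵀ) * A = Um := by
    rw [hA, Matrix.mul_assoc R⁻¹ Qᵀ (Q * Um), ← Matrix.mul_assoc Qᵀ Q Um, hQ,
      ← Matrix.mul_assoc, hRinvR, Matrix.one_mul]
  have hM2 : (Q * (R⁻¹ * Qᵀ)) * A = A := by
    rw [Matrix.mul_assoc, hM1, hA]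
  set F : (Fin s → ℝ) →ₗ[ℝ] (Fin n → ℝ) := (R⁻¹ * Qᵀ).mulVecLin with hF
  set SB : Submodule ℝ (Fin s → ℝ) := LinearMap.range Bstar.mulVecLin with hSB
  set SA : Submodule ℝ (Fin s → ℝ) := LinearMap.range A.mulVecLin with hSA
  have hcols : ∀ j, colV Bstar j ∈ SA := best_cols_mem A Bstar hBstarRank hBstarBest
  have hBA : SB ≤ SA := range_le_of_cols _ _ hcols
  have hZ : LinearMap.range (R⁻¹ * Qᵀ * Bstar).mulVecLin = SB.map F := by
    rw [Matrix.mulVecLin_mul, LinearMap.range_comp]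
  -- Part 1
  have part1 : LinearMap.range (R⁻¹ * Qᵀ * Bstar).mulVecLin ≤
      LinearMap.range Um.mulVecLin := by
    rw [hZ]
    have h1 : SB.map F ≤ SA.map F := Submodule.map_mono hBA
    have h2 : SA.map F = LinearMap.range Um.mulVecLin := by
      rw [hSA, hF, ← LinearMap.range_comp, ← Matrix.mulVecLin_mul, hM1]
    rw [← h2]; exact h1
  -- identity on SA
  have hid : ∀ v ∈ SA, (Q * (R⁻¹ * Qᵀ)).mulVecLin v = v := by
    rintro - ⟨x, rfl⟩
    show (Q * (R⁻¹ * Qᵀ)).mulVec (A.mulVec x) = A.mulVec x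
    rw [Matrix.mulVec_mulVec, hM2]
  have hmapQ : (SB.map F).map Q.mulVecLin = SB := by
    rw [← Submodule.map_comp, ← Matrix.mulVecLin_mul]
    refine le_antisymm ?_ ?_
    · rintro - ⟨v, hv, rfl⟩
      rw [hid v (hBA hv)]; exact hv
    · intro v hv
      exact ⟨v, hv, hid v (hBA hv)⟩
  -- Part 2
  have part2 : Module.finrank ℝ (LinearMap.range (R⁻¹ * Qᵀ * Bstar).mulVecLin) = r := by
    rw [hZ]
    have hle1 : Module.finrank ℝ (SB.map F) ≤ Module.finrank ℝ SB :=
      Submodule.finrank_map_le _ _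
    have hle2 : Module.finrank ℝ SB ≤ Module.finrank ℝ (SB.map F) := by
      conv_lhs => rw [← hmapQ]
      exact Submodule.finrank_map_le _ _
    have heq : Module.finrank ℝ (SB.map F) = Bstar.rank :=
      le_antisymm hle1 hle2
    rw [heq]
    exact best_rank_eq A Bstar hr hBstarRank hBstarBest
  refine ⟨part1, part2, ?_⟩
  -- Part 3
  have hip : ∀ x y : Fin n → ℝ, ipR R x y = Q.mulVec x ⬝ᵥ Q.mulVec y := by
    intro x y
    rw [ipR, ← hQ, ← Matrix.mulVec_mulVec, Matrix.mulVec_transpose,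
      ← Matrix.dotProduct_mulVec]
  have hnorm : ∀ x : Fin n → ℝ, normR R x ^ 2 = Q.mulVec x ⬝ᵥ Q.mulVec x := by
    intro x
    rw [normR, Real.sq_sqrt, hip]
    rw [hip]
    exact Finset.sum_nonneg fun i _ => mul_self_nonneg _
  have hcolA : ∀ i, colV A i = Q.mulVec (colV Um i) := by
    intro i; funext j
    simp [colV, hA, Matrix.mul_apply, Matrix.mulVec, dotProduct]
  -- the z vectors
  set z : Fin m → (Fin n → ℝ) := fun i => (R⁻¹ * Qᵀ).mulVec (colV Bstar i) with hz
  have hz_mem : ∀ i, z i ∈ LinearMap.range (R⁻¹ * Qᵀ * Bstar).mulVecLin := by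
    intro i
    rw [hZ]
    exact Submodule.mem_map_of_mem (col_mem_range Bstar i)
  have hQz : ∀ i, Q.mulVec (z i) = colV Bstar i := by
    intro i
    obtain ⟨x, hx⟩ := hcols i
    rw [hz]
    simp only
    rw [← hx]
    show Q.mulVec ((R⁻¹ * Qᵀ).mulVec (A.mulVec x)) = A.mulVec x
    rw [Matrix.mulVec_mulVec, Matrix.mulVec_mulVec, ← Matrix.mul_assoc,
      Matrix.mul_assoc (Q * (R⁻¹ * Qᵀ)) Q Um, ← hA, hM2]
  -- p-side inequality, per column
  have hpcol : ∀ i, normR R (colV Um i - p i) ^ 2 ≤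
      colV (A - Bstar) i ⬝ᵥ colV (A - Bstar) i := by
    intro i
    have hxy : Q.mulVec (colV Um i - p i) ⬝ᵥ Q.mulVec (p i - z i) = 0 := by
      rw [← hip]
      exact hporth i _ (Submodule.sub_mem _ (hpmem i) (hz_mem i))
    have hyx : Q.mulVec (p i - z i) ⬝ᵥ Q.mulVec (colV Um i - p i) = 0 := by
      rw [dotProduct_comm]; exact hxy
    have hdecomp : colV (A - Bstar) i =
        Q.mulVec (colV Um i - p i) + Q.mulVec (p i - z i) := by
      have h1 : colV (A - Bstar) i = colV A i - colV Bstar i := by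
        funext j; simp [colV, Matrix.sub_apply]
      rw [h1, hcolA i, ← hQz i, Matrix.mulVec_sub, Matrix.mulVec_sub]
      abel
    rw [hdecomp, hnorm]
    have hynn : 0 ≤ Q.mulVec (p i - z i) ⬝ᵥ Q.mulVec (p i - z i) :=
      Finset.sum_nonneg fun j _ => mul_self_nonneg _
    simp only [dotProduct_add, add_dotProduct, hxy, hyx]
    linarith
  have hpsum : ∑ i, normR R (colV Um i - p i) ^ 2 ≤ frob2 (A - Bstar) := by
    rw [frob2_eq_sum_cols]
    exact Finset.sum_le_sum fun i _ => hpcol i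
  -- q side
  intro W hW hWr q hq
  set Cq : Matrix (Fin s) (Fin m) ℝ := Matrix.of fun j i => Q.mulVec (q i) j with hCq
  have hcolCq : ∀ i, colV Cq i = Q.mulVec (q i) := fun i => rfl
  have hrankCq : Cq.rank ≤ r := by
    have h1 : LinearMap.range Cq.mulVecLin ≤ W.map Q.mulVecLin := by
      refine range_le_of_cols _ _ fun i => ?_
      rw [hcolCq]
      exact Submodule.mem_map_of_mem (hq i).1
    calc Cq.rank ≤ Module.finrank ℝ (W.map Q.mulVecLin) := Submodule.finrank_mono h1
      _ ≤ Module.finrank ℝ W := Submodule.finrank_map_le _ _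
      _ = r := hWr
  have hqsum : frob2 (A - Cq) = ∑ i, normR R (colV Um i - q i) ^ 2 := by
    rw [frob2_eq_sum_cols]
    refine Finset.sum_congr rfl fun i _ => ?_
    have h1 : colV (A - Cq) i = Q.mulVec (colV Um i - q i) := by
      funext j
      simp only [colV, Matrix.sub_apply, Matrix.mulVec_sub, Pi.sub_apply]
      rw [← hcolA i]
      rfl
    rw [h1, hnorm]
  calc ∑ i, normR R (colV Um i - p i) ^ 2 ≤ frob2 (A - Bstar) := hpsum
    _ ≤ frob2 (A - Cq) := hBstarBest Cq hrankCq
    _ = ∑ i, normR R (colV Um i - q i) ^ 2 := hqsum
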